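/- A two-vote election (C,(V1,V2)) with V1 fixed avoids all four (2,4)-configurations (dabc,dcba), (adbc,dcba), (dabc,cdba), (adbc,cdba) if and only if the permutation p(V1,V2) avoids the patterns 1432, 4132, 2431, and 4231. -/

import Mathlib

structure Election where
  nvoters : ℕ
  ncands : ℕ
  votes : Fin nvoters → Equiv.Perm (Fin ncands)

def ElectionContains (E F : Election) : Prop :=
  ∃ f : Fin F.nvoters → Fin E.nvoters, ∃ g : Fin F.ncands → Fin E.ncands,
    Function.Injective f ∧ Function.Injective g ∧
    ∀ (i : Fin F.nvoters) (x y : Fin F.ncands),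
      F.votes i x < F.votes i y → E.votes (f i) (g x) < E.votes (f i) (g y)

def PatternContains {m k : ℕ} (τ : Equiv.Perm (Fin m)) (π : Equiv.Perm (Fin k)) : Prop :=
  ∃ μ ρ : Fin k → Fin m, StrictMono μ ∧ StrictMono ρ ∧ ∀ j, τ (ρ j) = μ (π j)

/-- Build a permutation of `Fin 4` from explicit function tables. -/
def mk4 (f g : Fin 4 → Fin 4) (h₁ : ∀ x, g (f x) = x) (h₂ : ∀ x, f (g x) = x) :
    Equiv.Perm (Fin 4) := ⟨f, g, h₁, h₂⟩

/- Linear orders on `{a,b,c,d}` (candidates `a = 0, b = 1, c = 2, d = 3`), given as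
rank functions, e.g. `Tdabc` is `d > a > b > c`. -/
def Tdabc : Equiv.Perm (Fin 4) := mk4 ![1,2,3,0] ![3,0,1,2] (by decide) (by decide)
def Tdcba : Equiv.Perm (Fin 4) := mk4 ![3,2,1,0] ![3,2,1,0] (by decide) (by decide)
def Tadbc : Equiv.Perm (Fin 4) := mk4 ![0,2,3,1] ![0,3,1,2] (by decide) (by decide)
def Tcdba : Equiv.Perm (Fin 4) := mk4 ![3,2,0,1] ![2,3,1,0] (by decide) (by decide)

/- The patterns 1432, 4132, 2431, 4231 (0-indexed as permutations of `Fin 4`). -/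
def p1432 : Equiv.Perm (Fin 4) := mk4 ![0,3,2,1] ![0,3,2,1] (by decide) (by decide)
def p4132 : Equiv.Perm (Fin 4) := mk4 ![3,0,2,1] ![1,3,2,0] (by decide) (by decide)
def p2431 : Equiv.Perm (Fin 4) := mk4 ![1,3,2,0] ![3,0,2,1] (by decide) (by decide)
def p4231 : Equiv.Perm (Fin 4) := mk4 ![3,1,2,0] ![3,1,2,0] (by decide) (by decide)

/-- One-voter embedding condition. -/
def Emb {m : ℕ} (W₁ W₂ : Equiv.Perm (Fin m)) (T₁ T₂ : Equiv.Perm (Fin 4)) : Prop :=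
  ∃ g : Fin 4 → Fin m, Function.Injective g ∧
    (∀ x y, T₁ x < T₁ y → W₁ (g x) < W₁ (g y)) ∧
    (∀ x y, T₂ x < T₂ y → W₂ (g x) < W₂ (g y))

lemma emb_iff {m : ℕ} (W₁ W₂ : Equiv.Perm (Fin m)) (T₁ T₂ : Equiv.Perm (Fin 4)) :
    Emb W₁ W₂ T₁ T₂ ↔ PatternContains (W₂ * W₁⁻¹) (T₂ * T₁⁻¹) := by
  constructor
  · rintro ⟨g, -, h1, h2⟩
    refine ⟨fun j => W₂ (g (T₂⁻¹ j)), fun j => W₁ (g (T₁⁻¹ j)), ?_, ?_, ?_⟩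
    · intro i j hij
      exact h2 _ _ (by simpa using hij)
    · intro i j hij
      exact h1 _ _ (by simpa using hij)
    · intro j; simp [Equiv.Perm.mul_apply]
  · rintro ⟨μ, ρ, hμ, hρ, hτ⟩
    refine ⟨fun x => W₁⁻¹ (ρ (T₁ x)), ?_, ?_, ?_⟩
    · intro x y hxy
      have := hρ.injective (W₁⁻¹.injective hxy)
      exact T₁.injective this
    · intro x y hxy
      have := hρ hxy
      simpa using this
    · intro x y hxy
      have key : ∀ x, W₂ (W₁⁻¹ (ρ (T₁ x))) = μ (T₂ x) := by
        intro x
        have := hτ (T₁ x)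
        simpa [Equiv.Perm.mul_apply] using this
      rw [key, key]
      exact hμ hxy

lemma pc_inv {m k : ℕ} {τ : Equiv.Perm (Fin m)} {π : Equiv.Perm (Fin k)}
    (h : PatternContains τ π) : PatternContains τ⁻¹ π⁻¹ := by
  obtain ⟨μ, ρ, hμ, hρ, hτ⟩ := h
  refine ⟨ρ, μ, hρ, hμ, fun j => ?_⟩
  have := hτ (π⁻¹ j)
  rw [show π (π⁻¹ j) = j from Equiv.apply_symm_apply π j] at this
  rw [← this]
  simp

lemma pc_swap {m : ℕ} (W₁ W₂ : Equiv.Perm (Fin m)) (π : Equiv.Perm (Fin 4)) :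
    PatternContains (W₁ * W₂⁻¹) π ↔ PatternContains (W₂ * W₁⁻¹) π⁻¹ := by
  constructor
  · intro h
    have := pc_inv h
    simpa [mul_inv_rev] using this
  · intro h
    have := pc_inv h
    simpa [mul_inv_rev] using this

lemma elec_iff {m : ℕ} (V₁ V₂ : Equiv.Perm (Fin m)) (T₁ T₂ : Equiv.Perm (Fin 4)) :
    ElectionContains ⟨2, m, ![V₁, V₂]⟩ ⟨2, 4, ![T₁, T₂]⟩ ↔
      Emb V₁ V₂ T₁ T₂ ∨ Emb V₂ V₁ T₁ T₂ := by
  change (∃ f : Fin 2 → Fin 2, ∃ g : Fin 4 → Fin m,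
      Function.Injective f ∧ Function.Injective g ∧
      ∀ (i : Fin 2) (x y : Fin 4), (![T₁, T₂]) i x < (![T₁, T₂]) i y →
        (![V₁, V₂]) (f i) (g x) < (![V₁, V₂]) (f i) (g y)) ↔ _
  constructor
  · rintro ⟨f, g, hf, hg, h⟩
    have h0 := h 0
    have h1 := h 1
    simp only [Matrix.cons_val_zero, Matrix.cons_val_one, Matrix.head_cons] at h0 h1
    have hne : f 0 ≠ f 1 := fun e => absurd (hf e) (by decide)
    have c0 : f 0 = 0 ∨ f 0 = 1 := by omega
    have c1 : f 1 = 0 ∨ f 1 = 1 := by omega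
    rcases c0 with hf0 | hf0 <;> rcases c1 with hf1 | hf1
    · rw [hf0, hf1] at hne; exact absurd rfl hne
    · rw [hf0] at h0; rw [hf1] at h1
      simp only [Matrix.cons_val_zero, Matrix.cons_val_one, Matrix.head_cons] at h0 h1
      exact Or.inl ⟨g, hg, h0, h1⟩
    · rw [hf0] at h0; rw [hf1] at h1
      simp only [Matrix.cons_val_zero, Matrix.cons_val_one, Matrix.head_cons] at h0 h1
      exact Or.inr ⟨g, hg, h0, h1⟩
    · rw [hf0, hf1] at hne; exact absurd rfl hne
  · rintro (⟨g, hg, h1, h2⟩ | ⟨g, hg, h1, h2⟩)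
    · refine ⟨id, g, Function.injective_id, hg, ?_⟩
      intro i x y
      have hi : i = 0 ∨ i = 1 := by omega
      rcases hi with hi | hi <;> rw [hi] <;>
        simp only [Matrix.cons_val_zero, Matrix.cons_val_one, Matrix.head_cons, id] <;>
        [exact h1 x y; exact h2 x y]
    · refine ⟨![1, 0], g, by decide, hg, ?_⟩
      intro i x y
      have hi : i = 0 ∨ i = 1 := by omega
      rcases hi with hi | hi <;> rw [hi] <;>
        simp only [Matrix.cons_val_zero, Matrix.cons_val_one, Matrix.head_cons] <;>
        [exact h1 x y; exact h2 x y]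

lemma elec_iff' {m : ℕ} (V₁ V₂ : Equiv.Perm (Fin m)) (T₁ T₂ : Equiv.Perm (Fin 4)) :
    ElectionContains ⟨2, m, ![V₁, V₂]⟩ ⟨2, 4, ![T₁, T₂]⟩ ↔
      PatternContains (V₂ * V₁⁻¹) (T₂ * T₁⁻¹) ∨
      PatternContains (V₂ * V₁⁻¹) (T₂ * T₁⁻¹)⁻¹ := by
  rw [elec_iff, emb_iff, emb_iff]
  exact or_congr Iff.rfl (pc_swap V₁ V₂ _)

/-- A two-vote election `(V₁,V₂)` avoids the four `(2,4)`-configurations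
`(dabc,dcba)`, `(adbc,dcba)`, `(dabc,cdba)`, `(adbc,cdba)` iff the permutation
`p(V₁,V₂) = V₂ ∘ V₁⁻¹` avoids the patterns 1432, 4132, 2431 and 4231. -/
theorem avoids_sp_configs_iff_avoids_patterns (m : ℕ) (V₁ V₂ : Equiv.Perm (Fin m)) :
    (¬ ElectionContains ⟨2, m, ![V₁, V₂]⟩ ⟨2, 4, ![Tdabc, Tdcba]⟩ ∧
     ¬ ElectionContains ⟨2, m, ![V₁, V₂]⟩ ⟨2, 4, ![Tadbc, Tdcba]⟩ ∧
     ¬ ElectionContains ⟨2, m, ![V₁, V₂]⟩ ⟨2, 4, ![Tdabc, Tcdba]⟩ ∧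
     ¬ ElectionContains ⟨2, m, ![V₁, V₂]⟩ ⟨2, 4, ![Tadbc, Tcdba]⟩) ↔
    (¬ PatternContains (V₂ * V₁⁻¹) p1432 ∧
     ¬ PatternContains (V₂ * V₁⁻¹) p4132 ∧
     ¬ PatternContains (V₂ * V₁⁻¹) p2431 ∧
     ¬ PatternContains (V₂ * V₁⁻¹) p4231) := by
  have e1 : Tdcba * Tdabc⁻¹ = p1432 := by decide
  have e2 : Tdcba * Tadbc⁻¹ = p4132 := by decide
  have e3 : Tcdba * Tdabc⁻¹ = p2431 := by decide
  have e4 : Tcdba * Tadbc⁻¹ = p4231 := by decide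
  have i1 : p1432⁻¹ = p1432 := by decide
  have i2 : p4132⁻¹ = p2431 := by decide
  have i3 : p2431⁻¹ = p4132 := by decide
  have i4 : p4231⁻¹ = p4231 := by decide
  rw [elec_iff', elec_iff', elec_iff', elec_iff', e1, e2, e3, e4, i1, i2, i3, i4]
  tauto
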